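/- Let k ≥ 2, s ∈ (0, 1/(2k)], and let v be a valuation on the pie of circumference 1 given by a nonnegative integrable density. Suppose the pie admits an s-separated partition into k arcs each of strictly positive value, and suppose some arc [x,y] of length 1/(2k) has v-value 0. Then the cake obtained by removing the open arc (x,y) from the pie admits an s-separated partition into k intervals each of strictly positive value. -/
import Mathlib


open MeasureTheory

noncomputable def pieVal (f : ℝ → ℝ) (x y : ℝ) : ℝ := ∫ t in x..y, f (Int.fract t)

def isPiePartition (k : ℕ) (s : ℝ) (a b : ℕ → ℝ) : Prop :=
  (∀ j, j < k → a j ≤ b j) ∧ (∀ j, j + 1 < k → b j + s ≤ a (j + 1)) ∧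
    b (k - 1) + s ≤ a 0 + 1

lemma pieVal_shift (f : ℝ → ℝ) (u v : ℝ) (n : ℤ) :
    pieVal f (u + n) (v + n) = pieVal f u v := by
  unfold pieVal
  have h := intervalIntegral.integral_comp_add_right (a := u) (b := v)
    (fun t => f (Int.fract t)) (n : ℝ)
  simp only [Int.fract_add_intCast] at h
  exact h.symm

lemma pieVal_nonneg (f : ℝ → ℝ) (hf0 : ∀ t, 0 ≤ f t) {u v : ℝ} (h : u ≤ v) :
    0 ≤ pieVal f u v :=
  intervalIntegral.integral_nonneg h (fun t _ => hf0 _)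

lemma pieVal_add (f : ℝ → ℝ)
    (hfi : ∀ x y : ℝ, IntervalIntegrable (fun t => f (Int.fract t)) volume x y)
    (p q r : ℝ) : pieVal f p q + pieVal f q r = pieVal f p r :=
  intervalIntegral.integral_add_adjacent_intervals (hfi p q) (hfi q r)

lemma le_of_pieVal_pos (f : ℝ → ℝ) (hf0 : ∀ t, 0 ≤ f t) {u v : ℝ}
    (h : 0 < pieVal f u v) : u ≤ v := by
  by_contra hc
  push_neg at hc
  have h1 : 0 ≤ pieVal f v u := pieVal_nonneg f hf0 hc.le
  have h2 : pieVal f u v = - pieVal f v u := intervalIntegral.integral_symm v u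
  linarith

lemma lt_of_pieVal_pos (f : ℝ → ℝ) (hf0 : ∀ t, 0 ≤ f t) {u v : ℝ}
    (h : 0 < pieVal f u v) : u < v := by
  rcases eq_or_lt_of_le (le_of_pieVal_pos f hf0 h) with he | h'
  · exfalso; rw [← he] at h; simp [pieVal] at h
  · exact h'

lemma pieVal_zero_sub (f : ℝ → ℝ) (hf0 : ∀ t, 0 ≤ f t)
    (hfi : ∀ x y : ℝ, IntervalIntegrable (fun t => f (Int.fract t)) volume x y)
    {p q X Z : ℝ} (h0 : pieVal f X Z = 0)
    (h1 : X ≤ p) (h2 : p ≤ q) (h3 : q ≤ Z) : pieVal f p q = 0 := by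
  have e1 := pieVal_add f hfi X p q
  have e2 := pieVal_add f hfi X q Z
  have n1 := pieVal_nonneg f hf0 h1
  have n2 := pieVal_nonneg f hf0 h2
  have n3 := pieVal_nonneg f hf0 h3
  linarith


/-- If the pie admits an `s`-separated partition into `k` arcs of strictly positive value, and
some arc `[x, x + 1/(2k)]` of length `1/(2k)` has value `0`, then the cake obtained by
removing that arc from the pie admits an `s`-separated partition into `k` intervals of
strictly positive value. -/
theorem stmt_18 (k : ℕ) (hk : 2 ≤ k) (s : ℝ) (hs : 0 < s) (hs' : s ≤ 1 / (2 * (k : ℝ)))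
    (f : ℝ → ℝ) (hf0 : ∀ t, 0 ≤ f t)
    (hfi : ∀ x y : ℝ, IntervalIntegrable (fun t => f (Int.fract t)) volume x y)
    (a b : ℕ → ℝ) (hpart : isPiePartition k s a b)
    (hpos : ∀ j, j < k → 0 < pieVal f (a j) (b j))
    (x : ℝ) (hzero : pieVal f x (x + 1 / (2 * (k : ℝ))) = 0) :
    ∃ a' b' : ℕ → ℝ,
      x + 1 / (2 * (k : ℝ)) ≤ a' 0 ∧
      (∀ j, j < k → a' j ≤ b' j) ∧
      (∀ j, j + 1 < k → b' j + s ≤ a' (j + 1)) ∧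
      b' (k - 1) ≤ x + 1 ∧
      (∀ j, j < k → 0 < pieVal f (a' j) (b' j)) := by
  classical
  obtain ⟨h1, h2, h3⟩ := hpart
  have hkR : (2:ℝ) ≤ (k:ℝ) := by exact_mod_cast hk
  have h2k : (0:ℝ) < 2 * (k:ℝ) := by linarith
  set Y := x + 1 / (2 * (k:ℝ)) with hYdef
  have hxY : x < Y := by
    have hp : 0 < 1 / (2*(k:ℝ)) := by positivity
    rw [hYdef]; linarith
  have hYx : Y ≤ x + 1 := by
    have hle : 1 / (2*(k:ℝ)) ≤ 1 := by
      rw [div_le_one h2k]; linarith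
    rw [hYdef]; linarith
  set N : ℤ := ⌈x - a 0⌉ - 1 with hNdef
  have hNcast : (N:ℝ) = (⌈x - a 0⌉ : ℝ) - 1 := by rw [hNdef]; push_cast; ring
  set A : ℕ → ℝ := fun j => a j + (N:ℝ) with hAdef
  set B : ℕ → ℝ := fun j => b j + (N:ℝ) with hBdef
  have hNl : x - 1 ≤ A 0 := by
    simp only [hAdef]
    have := Int.le_ceil (x - a 0)
    rw [hNcast]; linarith
  have hNr : A 0 < x := by
    simp only [hAdef]
    have := Int.ceil_lt_add_one (x - a 0)
    rw [hNcast]; linarith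
  have hAB : ∀ j, j < k → A j ≤ B j := fun j hj => by
    simp only [hAdef, hBdef]; linarith [h1 j hj]
  have hgap : ∀ j, j + 1 < k → B j + s ≤ A (j + 1) := fun j hj => by
    simp only [hAdef, hBdef]; linarith [h2 j hj]
  have hwrap : B (k - 1) + s ≤ A 0 + 1 := by
    simp only [hAdef, hBdef]; linarith
  have hApos : ∀ j, j < k → 0 < pieVal f (A j) (B j) := fun j hj => by
    simp only [hAdef, hBdef]
    rw [pieVal_shift f (a j) (b j) N]
    exact hpos j hj
  have hchain : ∀ j, j < k → ∀ i, i < j → B i + s ≤ A j := by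
    intro j
    induction j with
    | zero => intro _ i hi; exact absurd hi (Nat.not_lt_zero i)
    | succ n ih =>
      intro hj i hi
      rcases Nat.lt_succ_iff_lt_or_eq.mp hi with h | h
      · have e1 := ih (by omega) i h
        have e2 := hAB n (by omega)
        have e3 := hgap n hj
        linarith
      · subst h; exact hgap i hj
  have hA0 : ∀ j, j < k → A 0 ≤ A j := by
    intro j hj
    rcases Nat.eq_zero_or_pos j with h | h
    · rw [h]
    · have e1 := hchain j hj 0 h
      have e2 := hAB 0 (by omega)
      linarith
  have hAx : ∀ j, j < k → x - 1 ≤ A j := fun j hj => le_trans hNl (hA0 j hj)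
  have hBtop : ∀ j, j < k → B j ≤ B (k - 1) := by
    intro j hj
    rcases Nat.lt_or_ge j (k-1) with h | h
    · have e1 := hchain (k-1) (by omega) j h
      have e2 := hAB (k-1) (by omega)
      linarith
    · have he : j = k - 1 := by omega
      rw [he]
  have hBx : ∀ j, j < k → B j < x + 1 := by
    intro j hj
    have := hBtop j hj
    linarith
  have hz2 : pieVal f x Y = 0 := hzero
  have hz1 : pieVal f (x - 1) (Y - 1) = 0 := by
    have h := pieVal_shift f (x - 1) (Y - 1) 1
    push_cast at h
    rw [show x - 1 + 1 = x by ring, show Y - 1 + 1 = Y by ring] at h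
    rw [← h]; exact hz2
  set u1 : ℕ → ℝ := fun j => max (A j) (min (B j) (Y - 1)) with hu1
  set u2 : ℕ → ℝ := fun j => max (A j) (min (B j) x) with hu2
  set u3 : ℕ → ℝ := fun j => max (A j) (min (B j) Y) with hu3
  have hAu1 : ∀ j, A j ≤ u1 j := fun j => by simp only [hu1]; exact le_max_left _ _
  have hu12 : ∀ j, u1 j ≤ u2 j := fun j => by
    simp only [hu1, hu2]
    exact max_le_max le_rfl (min_le_min le_rfl (by linarith))
  have hu23 : ∀ j, u2 j ≤ u3 j := fun j => by
    simp only [hu2, hu3]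
    exact max_le_max le_rfl (min_le_min le_rfl (by linarith))
  have hu3B : ∀ j, j < k → u3 j ≤ B j := fun j hj => by
    simp only [hu3]
    exact max_le (hAB j hj) (min_le_left _ _)
  have hu2B : ∀ j, j < k → u2 j ≤ B j := fun j hj => le_trans (hu23 j) (hu3B j hj)
  have hdec : ∀ j, j < k → pieVal f (A j) (B j) =
      pieVal f (A j) (u1 j) + pieVal f (u1 j) (u2 j) + pieVal f (u2 j) (u3 j)
        + pieVal f (u3 j) (B j) := by
    intro j hj
    have e1 := pieVal_add f hfi (A j) (u1 j) (u2 j)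
    have e2 := pieVal_add f hfi (A j) (u2 j) (u3 j)
    have e3 := pieVal_add f hfi (A j) (u3 j) (B j)
    linarith
  have hzero1 : ∀ j, j < k → pieVal f (A j) (u1 j) = 0 := by
    intro j hj
    by_cases hc : min (B j) (Y - 1) ≤ A j
    · have he : u1 j = A j := by simp only [hu1]; exact max_eq_left hc
      rw [he]; simp [pieVal]
    · push_neg at hc
      have hu : u1 j = min (B j) (Y - 1) := by simp only [hu1]; exact max_eq_right hc.le
      refine pieVal_zero_sub f hf0 hfi hz1 (hAx j hj) ?_ ?_
      · rw [hu]; exact hc.le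
      · rw [hu]; exact min_le_right _ _
  have hzero2 : ∀ j, j < k → pieVal f (u2 j) (u3 j) = 0 := by
    intro j hj
    by_cases hbx : B j ≤ x
    · have e2 : u2 j = B j := by
        simp only [hu2]; rw [min_eq_left hbx]; exact max_eq_right (hAB j hj)
      have e3 : u3 j = B j := by
        simp only [hu3]; rw [min_eq_left (le_trans hbx hxY.le)]
        exact max_eq_right (hAB j hj)
      rw [e2, e3]; simp [pieVal]
    · by_cases hay : Y ≤ A j
      · have e2 : u2 j = A j := by
          simp only [hu2]
          exact max_eq_left (le_trans (min_le_right _ _) (by linarith))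
        have e3 : u3 j = A j := by
          simp only [hu3]
          exact max_eq_left (le_trans (min_le_right _ _) hay)
        rw [e2, e3]; simp [pieVal]
      · push_neg at hbx hay
        refine pieVal_zero_sub f hf0 hfi hz2 ?_ (hu23 j) ?_
        · simp only [hu2]
          rw [min_eq_right hbx.le]
          exact le_max_right _ _
        · simp only [hu3]
          exact max_le hay.le (min_le_right _ _)
  have hn2 : ∀ j, j < k → 0 ≤ pieVal f (u3 j) (B j) := fun j hj =>
    pieVal_nonneg f hf0 (hu3B j hj)
  have hTex : ∃ j, j = k ∨ (j < k ∧ 0 < pieVal f (u3 j) (B j)) := ⟨k, Or.inl rfl⟩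
  let m := Nat.find hTex
  have hmspec : m = k ∨ (m < k ∧ 0 < pieVal f (u3 m) (B m)) := Nat.find_spec hTex
  have hmk : m ≤ k := Nat.find_min' hTex (Or.inl rfl)
  have hmmin : ∀ j, j < m → ¬ (0 < pieVal f (u3 j) (B j)) := by
    intro j hj hposj
    have hjk : j < k := by omega
    exact (Nat.find_min hTex hj) (Or.inr ⟨hjk, hposj⟩)
  have hSfact : ∀ j, j < m →
      0 < pieVal f (u1 j) (u2 j) ∧ Y - 1 ≤ u1 j ∧ u2 j ≤ x := by
    intro j hj
    have hjk : j < k := by omega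
    have hv2 : pieVal f (u3 j) (B j) = 0 :=
      le_antisymm (le_of_not_gt (hmmin j hj)) (hn2 j hjk)
    have hv1 : 0 < pieVal f (u1 j) (u2 j) := by
      have d := hdec j hjk
      have z1 := hzero1 j hjk
      have z2 := hzero2 j hjk
      have p := hApos j hjk
      linarith
    have hne : u1 j < u2 j := lt_of_pieVal_pos f hf0 hv1
    refine ⟨hv1, ?_, ?_⟩
    · by_cases hB : Y - 1 ≤ B j
      · have hmin : min (B j) (Y - 1) = Y - 1 := min_eq_right hB
        simp only [hu1]; rw [hmin]; exact le_max_right _ _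
      · exfalso
        push_neg at hB
        have e1 : u1 j = max (A j) (B j) := by simp only [hu1]; rw [min_eq_left hB.le]
        have e2 : u2 j = max (A j) (B j) := by
          simp only [hu2]; rw [min_eq_left (by linarith : B j ≤ x)]
        rw [e1, e2] at hne; exact lt_irrefl _ hne
    · by_cases hax : A j ≤ x
      · simp only [hu2]; exact max_le hax (min_le_right _ _)
      · push_neg at hax
        exfalso
        have e1 : u1 j = A j := by
          simp only [hu1]
          exact max_eq_left (le_trans (min_le_right _ _) (by linarith))
        have e2 : u2 j = A j := by
          simp only [hu2]
          exact max_eq_left (le_trans (min_le_right _ _) hax.le)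
        rw [e1, e2] at hne; exact lt_irrefl _ hne
  have hT2 : ∀ j, m ≤ j → j < k → 0 < pieVal f (u3 j) (B j) := by
    intro j hmj hjk
    have hmlt : m < k := lt_of_le_of_lt hmj hjk
    have hmpos : 0 < pieVal f (u3 m) (B m) := by
      rcases hmspec with h | h
      · omega
      · exact h.2
    rcases eq_or_lt_of_le hmj with he | hlt
    · rw [← he]; exact hmpos
    · have hu3m : u3 m < B m := lt_of_pieVal_pos f hf0 hmpos
      have hYB : Y < B m := by
        by_contra hc
        push_neg at hc
        have he2 : u3 m = B m := by
          simp only [hu3]; rw [min_eq_left hc]; exact max_eq_right (hAB m hmlt)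
        rw [he2] at hu3m; exact lt_irrefl _ hu3m
      have hAj : Y < A j := by
        have := hchain j hjk m hlt
        linarith
      have e1 : u1 j = A j := by
        simp only [hu1]
        exact max_eq_left (le_trans (min_le_right _ _) (by linarith))
      have e2 : u2 j = A j := by
        simp only [hu2]
        exact max_eq_left (le_trans (min_le_right _ _) (by linarith))
      have hv1 : pieVal f (u1 j) (u2 j) = 0 := by rw [e1, e2]; simp [pieVal]
      have d := hdec j hjk
      have z1 := hzero1 j hjk
      have z2 := hzero2 j hjk
      have p := hApos j hjk
      linarith
  have hTfact : ∀ j, j < k → 0 < pieVal f (u3 j) (B j) → Y ≤ u3 j := by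
    intro j hjk hp
    have h' : u3 j < B j := lt_of_pieVal_pos f hf0 hp
    by_cases hb : B j ≤ Y
    · exfalso
      have he : u3 j = B j := by
        simp only [hu3]; rw [min_eq_left hb]; exact max_eq_right (hAB j hjk)
      rw [he] at h'; exact lt_irrefl _ h'
    · push_neg at hb
      simp only [hu3]; rw [min_eq_right hb.le]; exact le_max_right _ _
  set a' : ℕ → ℝ := fun i => if i + m < k then u3 (i + m) else u1 (i + m - k) + 1 with ha'
  set b' : ℕ → ℝ := fun i => if i + m < k then B (i + m) else u2 (i + m - k) + 1 with hb'
  have hpos' : ∀ i, i < k → 0 < pieVal f (a' i) (b' i) := by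
    intro i hi
    by_cases hc : i + m < k
    · simp only [ha', hb']
      rw [if_pos hc, if_pos hc]
      exact hT2 (i + m) (Nat.le_add_left m i) hc
    · simp only [ha', hb']
      rw [if_neg hc, if_neg hc]
      have hj : i + m - k < m := by omega
      have h := pieVal_shift f (u1 (i + m - k)) (u2 (i + m - k)) 1
      push_cast at h
      rw [h]
      exact (hSfact _ hj).1
  refine ⟨a', b', ?_, ?_, ?_, ?_, hpos'⟩
  · by_cases hc : 0 + m < k
    · simp only [ha']
      rw [if_pos hc]
      exact hTfact _ hc (hT2 (0 + m) (Nat.le_add_left m 0) hc)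
    · simp only [ha']
      rw [if_neg hc]
      have hj : 0 + m - k < m := by omega
      have := (hSfact _ hj).2.1
      linarith
  · intro i hi
    exact le_of_pieVal_pos f hf0 (hpos' i hi)
  · intro i hi
    by_cases hc : i + 1 + m < k
    · have hc' : i + m < k := by omega
      simp only [ha', hb']
      rw [if_pos hc, if_pos hc']
      have hg := hgap (i + m) (by omega)
      have he : i + 1 + m = i + m + 1 := by omega
      rw [he]
      calc B (i + m) + s ≤ A (i + m + 1) := hg
        _ ≤ u3 (i + m + 1) := le_trans (hAu1 _) (le_trans (hu12 _) (hu23 _))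
    · by_cases hc' : i + m < k
      · simp only [ha', hb']
        rw [if_pos hc', if_neg hc]
        have he : i + m = k - 1 := by omega
        have he2 : i + 1 + m - k = 0 := by omega
        rw [he, he2]
        have := hAu1 0
        linarith
      · simp only [ha', hb']
        rw [if_neg hc, if_neg hc']
        have hj1 : i + 1 + m - k = (i + m - k) + 1 := by omega
        have hjk : (i + m - k) + 1 < k := by omega
        have hg := hgap (i + m - k) hjk
        have hub := hu2B (i + m - k) (by omega)
        rw [hj1]
        have := hAu1 ((i + m - k) + 1)
        linarith
  · by_cases hc : k - 1 + m < k
    · simp only [hb']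
      rw [if_pos hc]
      have := hBx (k - 1 + m) hc
      linarith
    · simp only [hb']
      rw [if_neg hc]
      have hj : k - 1 + m - k < m := by omega
      have := (hSfact _ hj).2.2
      linarith
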